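/- Let N ≥ 3, let ν ≠ 0 be a real number, and let Y : ℝ^N → ℝ be a Schwartz function satisfying −ΔY(x) − ((N+2)/(N−2))W(x)^{4/(N−2)} Y(x) = −ν² Y(x) for all x ∈ ℝ^N. Then Y is orthogonal to the scaling mode: ∫_{ℝ^N} Y(x) · ΛW(x) dx = 0, where ΛW(x) = ((N−2)/2)W(x) + x·∇W(x). -/

import Mathlib

open MeasureTheory Real

noncomputable def groundW (N : ℕ) (x : EuclideanSpace ℝ (Fin N)) : ℝ :=
  (1 + ‖x‖ ^ 2 / ((N : ℝ) * ((N : ℝ) - 2))) ^ (-(((N : ℝ) - 2) / 2))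

/-- The Euclidean Laplacian, written as a sum of second partial derivatives. -/
noncomputable def lap {N : ℕ} (g : EuclideanSpace ℝ (Fin N) → ℝ)
    (x : EuclideanSpace ℝ (Fin N)) : ℝ :=
  ∑ i : Fin N,
    fderiv ℝ (fun y => fderiv ℝ g y (EuclideanSpace.single i 1)) x (EuclideanSpace.single i 1)

/-- The generator of scaling `ΛW(x) = ((N-2)/2) W(x) + x·∇W(x)`. -/
noncomputable def LamW (N : ℕ) (x : EuclideanSpace ℝ (Fin N)) : ℝ :=
  ((N : ℝ) - 2) / 2 * groundW N x + fderiv ℝ (groundW N) x x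

noncomputable def cc (N : ℕ) : ℝ := (N : ℝ) * ((N : ℝ) - 2)
noncomputable def pp (N : ℕ) : ℝ := ((N : ℝ) - 2) / 2
noncomputable def tt (N : ℕ) (s : ℝ) : ℝ := 1 + s / cc N
noncomputable def ph (N : ℕ) (k : ℕ) (s : ℝ) : ℝ := tt N s ^ (-(pp N) - k)

noncomputable def dd1 (N : ℕ) (s : ℝ) : ℝ := (-(pp N) / cc N) * ph N 1 s
noncomputable def dd2 (N : ℕ) (s : ℝ) : ℝ := (pp N * (pp N + 1) / (cc N)^2) * ph N 2 s
noncomputable def dd3 (N : ℕ) (s : ℝ) : ℝ :=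
  (-(pp N) * (pp N + 1) * (pp N + 2) / (cc N)^3) * ph N 3 s

noncomputable def psi0 (N : ℕ) (s : ℝ) : ℝ := pp N * ph N 0 s + 2 * s * dd1 N s
noncomputable def psi1 (N : ℕ) (s : ℝ) : ℝ := (pp N + 2) * dd1 N s + 2 * s * dd2 N s
noncomputable def psi2 (N : ℕ) (s : ℝ) : ℝ := (pp N + 4) * dd2 N s + 2 * s * dd3 N s

section
variable {N : ℕ} (hN : 3 ≤ N)
include hN

lemma hNR : (3:ℝ) ≤ (N:ℝ) := by exact_mod_cast hN
lemma hc : 0 < cc N := by have h := hNR hN; unfold cc; nlinarith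
lemma hp : 0 < pp N := by have h := hNR hN; unfold pp; linarith
lemma ht {s : ℝ} (hs : 0 ≤ s) : 1 ≤ tt N s := by
  unfold tt
  have h : 0 ≤ s / cc N := div_nonneg hs (hc hN).le
  linarith
lemma ht0 {s : ℝ} (hs : 0 ≤ s) : 0 < tt N s := lt_of_lt_of_le one_pos (ht hN hs)
lemma ph_pos {k : ℕ} {s : ℝ} (hs : 0 ≤ s) : 0 < ph N k s :=
  Real.rpow_pos_of_pos (ht0 hN hs) _
lemma ph_le_one {k : ℕ} {s : ℝ} (hs : 0 ≤ s) : ph N k s ≤ 1 := by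
  apply Real.rpow_le_one_of_one_le_of_nonpos (ht hN hs)
  have h := hp hN
  have h2 : (0:ℝ) ≤ k := Nat.cast_nonneg k
  linarith

lemma hasDerivAt_ph (k : ℕ) {s : ℝ} (hs : 0 ≤ s) :
    HasDerivAt (ph N k) (((-(pp N) - k) / cc N) * ph N (k+1) s) s := by
  have h1 : HasDerivAt (fun u => tt N u) (1 / cc N) s := by
    simpa [tt] using ((hasDerivAt_id s).div_const (cc N)).const_add 1
  have h2 := (Real.hasDerivAt_rpow_const (x := tt N s) (p := -(pp N) - k)
    (Or.inl (ht0 hN hs).ne')).comp s h1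
  have h3 : ph N (k+1) s = tt N s ^ (-(pp N) - k - 1) := by
    unfold ph; push_cast; ring_nf
  rw [h3]
  refine h2.congr_deriv ?_
  ring

lemma hasDerivAt_dd1 {s : ℝ} (hs : 0 ≤ s) : HasDerivAt (dd1 N) (dd2 N s) s := by
  have := (hasDerivAt_ph hN 1 hs).const_mul (-(pp N) / cc N)
  refine this.congr_deriv ?_
  unfold dd2
  push_cast
  ring

lemma hasDerivAt_dd2 {s : ℝ} (hs : 0 ≤ s) : HasDerivAt (dd2 N) (dd3 N s) s := by
  have := (hasDerivAt_ph hN 2 hs).const_mul (pp N * (pp N + 1) / (cc N)^2)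
  refine this.congr_deriv ?_
  unfold dd3
  push_cast
  ring

lemma hasDerivAt_psi0 {s : ℝ} (hs : 0 ≤ s) : HasDerivAt (psi0 N) (psi1 N s) s := by
  have h0 := (hasDerivAt_ph hN 0 hs).const_mul (pp N)
  have h1 : HasDerivAt (fun u => 2 * u * dd1 N u) (2 * dd1 N s + 2 * s * dd2 N s) s := by
    have h := (((hasDerivAt_id s).const_mul (2:ℝ)).mul (hasDerivAt_dd1 hN hs))
    simp only [id_eq, mul_one] at h
    exact h
    try ring
  have H := h0.add h1
  unfold psi0
  refine H.congr_deriv ?_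
  unfold psi1 dd1
  push_cast
  ring

lemma hasDerivAt_psi1 {s : ℝ} (hs : 0 ≤ s) : HasDerivAt (psi1 N) (psi2 N s) s := by
  have h0 := (hasDerivAt_dd1 hN hs).const_mul (pp N + 2)
  have h1 : HasDerivAt (fun u => 2 * u * dd2 N u) (2 * dd2 N s + 2 * s * dd3 N s) s := by
    have h := (((hasDerivAt_id s).const_mul (2:ℝ)).mul (hasDerivAt_dd2 hN hs))
    simp only [id_eq, mul_one] at h
    exact h
    try ring
  have H := h0.add h1
  unfold psi1
  refine H.congr_deriv ?_
  unfold psi2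
  ring

lemma ode {s : ℝ} (hs : 0 ≤ s) :
    4 * s * psi2 N s + 2 * N * psi1 N s
      + (((N:ℝ) + 2) / ((N:ℝ) - 2)) * (ph N 0 s) ^ ((4:ℝ) / ((N:ℝ) - 2)) * psi0 N s = 0 := by
  have hN2 : ((N:ℝ) - 2) ≠ 0 := by have := hNR hN; linarith
  have htpos := ht0 hN hs
  have hcpos := hc hN
  set t := tt N s with htdef
  set A := t ^ (-(pp N) - 3) with hA
  have hph : ∀ k : ℕ, (k ≤ 3) → ph N k s = A * t ^ ((3:ℕ) - k) := by
    intro k hk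
    have : ph N k s = t ^ ((-(pp N) - 3) + ((3:ℝ) - k)) := by
      unfold ph; ring_nf; rfl
    rw [this, Real.rpow_add htpos, hA]
    congr 1
    have : ((3:ℝ) - (k:ℝ)) = (((3 - k : ℕ) : ℝ)) := by
      have : (k:ℝ) ≤ 3 := by exact_mod_cast hk
      push_cast [Nat.cast_sub hk]
      ring
    rw [this, Real.rpow_natCast]
  have h0 := hph 0 (by norm_num)
  have h1 := hph 1 (by norm_num)
  have h2 := hph 2 (by norm_num)
  have h3 := hph 3 (by norm_num)
  have hpow : (ph N 0 s) ^ ((4:ℝ) / ((N:ℝ) - 2)) = (t^2)⁻¹ := by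
    have e1 : ph N 0 s = t ^ (-(pp N)) := by unfold ph; norm_num; rfl
    rw [e1, ← Real.rpow_natCast t 2, ← Real.rpow_neg htpos.le,
      ← Real.rpow_mul htpos.le]
    congr 1
    unfold pp
    field_simp
    ring
  have hsub : s = cc N * (t - 1) := by
    rw [htdef]; unfold tt; field_simp; ring
  rw [hpow]
  unfold psi2 psi1 psi0 dd1 dd2 dd3
  rw [h0, h1, h2, h3, hsub]
  have hcN : cc N = (N:ℝ) * ((N:ℝ) - 2) := rfl
  have hpN : pp N = ((N:ℝ) - 2) / 2 := rfl
  rw [hcN, hpN]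
  have hNne : (N:ℝ) ≠ 0 := by have := hNR hN; linarith
  have htne : t ≠ 0 := htpos.ne'
  field_simp
  ring

omit hN in
lemma radial_hasFDerivAt {g : ℝ → ℝ} {d : ℝ} (x : EuclideanSpace ℝ (Fin N))
    (hg : HasDerivAt g d (‖x‖ ^ 2)) :
    HasFDerivAt (fun y : EuclideanSpace ℝ (Fin N) => g (‖y‖ ^ 2))
      ((2 * d) • (innerSL ℝ x : EuclideanSpace ℝ (Fin N) →L[ℝ] ℝ)) x := by
  have hq : HasFDerivAt (fun y : EuclideanSpace ℝ (Fin N) => ‖y‖ ^ 2)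
      ((2:ℕ) • (innerSL ℝ x : EuclideanSpace ℝ (Fin N) →L[ℝ] ℝ)) x :=
    (hasStrictFDerivAt_norm_sq x).hasFDerivAt
  have h := hg.comp_hasFDerivAt x hq
  refine h.congr_fderiv ?_
  ext v
  simp [smul_smul]
  ring

omit hN in
lemma groundW_eq (x : EuclideanSpace ℝ (Fin N)) : groundW N x = ph N 0 (‖x‖ ^ 2) := by
  simp [groundW, ph, tt, cc, pp]

lemma hasFDerivAt_groundW (x : EuclideanSpace ℝ (Fin N)) :
    HasFDerivAt (groundW N)
      ((2 * dd1 N (‖x‖ ^ 2)) • (innerSL ℝ x : EuclideanSpace ℝ (Fin N) →L[ℝ] ℝ)) x := by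
  have hg : HasDerivAt (ph N 0) (dd1 N (‖x‖ ^ 2)) (‖x‖ ^ 2) := by
    have h := hasDerivAt_ph hN 0 (by positivity : (0:ℝ) ≤ ‖x‖ ^ 2)
    convert h using 1
    unfold dd1
    norm_num
  have h := radial_hasFDerivAt x hg
  rw [show groundW N = fun y : EuclideanSpace ℝ (Fin N) => ph N 0 (‖y‖ ^ 2) from
    funext groundW_eq]
  exact h

lemma LamW_eq (x : EuclideanSpace ℝ (Fin N)) : LamW N x = psi0 N (‖x‖ ^ 2) := by
  unfold LamW
  rw [(hasFDerivAt_groundW hN x).fderiv, groundW_eq x]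
  have : ((2 * dd1 N (‖x‖ ^ 2)) • (innerSL ℝ x : EuclideanSpace ℝ (Fin N) →L[ℝ] ℝ)) x
      = 2 * dd1 N (‖x‖ ^ 2) * (inner ℝ x x : ℝ) := rfl
  rw [this, real_inner_self_eq_norm_sq]
  unfold psi0 pp
  ring

lemma hasFDerivAt_LamW (x : EuclideanSpace ℝ (Fin N)) :
    HasFDerivAt (LamW N)
      ((2 * psi1 N (‖x‖ ^ 2)) • (innerSL ℝ x : EuclideanSpace ℝ (Fin N) →L[ℝ] ℝ)) x := by
  have h := radial_hasFDerivAt x (hasDerivAt_psi0 hN (by positivity : (0:ℝ) ≤ ‖x‖ ^ 2))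
  rw [show LamW N = fun y : EuclideanSpace ℝ (Fin N) => psi0 N (‖y‖ ^ 2) from
    funext (LamW_eq hN)]
  exact h

lemma fderiv_LamW_apply (x v : EuclideanSpace ℝ (Fin N)) :
    fderiv ℝ (LamW N) x v = 2 * psi1 N (‖x‖ ^ 2) * (inner ℝ x v : ℝ) := by
  rw [(hasFDerivAt_LamW hN x).fderiv]
  simp

lemma differentiable_LamW : Differentiable ℝ (LamW N) :=
  fun x => (hasFDerivAt_LamW hN x).differentiableAt

lemma hasFDerivAt_fderiv_LamW (x v : EuclideanSpace ℝ (Fin N)) :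
    HasFDerivAt (fun y => fderiv ℝ (LamW N) y v)
      (((2 * (inner ℝ v x : ℝ)) • ((2 * psi2 N (‖x‖ ^ 2)) • (innerSL ℝ x)))
        + ((2 * psi1 N (‖x‖ ^ 2)) • (innerSL ℝ v : EuclideanSpace ℝ (Fin N) →L[ℝ] ℝ))) x := by
  have ha : HasFDerivAt (fun y : EuclideanSpace ℝ (Fin N) => 2 * psi1 N (‖y‖ ^ 2))
      ((2 * (2 * psi2 N (‖x‖ ^ 2))) • (innerSL ℝ x : EuclideanSpace ℝ (Fin N) →L[ℝ] ℝ)) x := by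
    have hg : HasDerivAt (fun s => 2 * psi1 N s) (2 * psi2 N (‖x‖ ^ 2)) (‖x‖ ^ 2) :=
      (hasDerivAt_psi1 hN (by positivity : (0:ℝ) ≤ ‖x‖ ^ 2)).const_mul 2
    exact radial_hasFDerivAt x hg
  have hb : HasFDerivAt (fun y : EuclideanSpace ℝ (Fin N) => (inner ℝ v y : ℝ))
      (innerSL ℝ v : EuclideanSpace ℝ (Fin N) →L[ℝ] ℝ) x :=
    (innerSL ℝ v).hasFDerivAt
  have h := ha.mul hb
  have heq : (fun y => fderiv ℝ (LamW N) y v)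
      = fun y : EuclideanSpace ℝ (Fin N) => (2 * psi1 N (‖y‖ ^ 2)) * (inner ℝ v y : ℝ) := by
    funext y
    rw [fderiv_LamW_apply hN y v, real_inner_comm]
  rw [heq]
  refine h.congr_fderiv ?_
  ext w
  simp only [ContinuousLinearMap.add_apply, ContinuousLinearMap.smul_apply, innerSL_apply_apply,
    smul_eq_mul]
  ring

lemma second_deriv_LamW (x v : EuclideanSpace ℝ (Fin N)) :
    fderiv ℝ (fun y => fderiv ℝ (LamW N) y v) x v
      = 4 * psi2 N (‖x‖ ^ 2) * (inner ℝ v x : ℝ) ^ 2 + 2 * psi1 N (‖x‖ ^ 2) * ‖v‖ ^ 2 := by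
  rw [(hasFDerivAt_fderiv_LamW hN x v).fderiv]
  have : (((2 * (inner ℝ v x : ℝ)) • ((2 * psi2 N (‖x‖ ^ 2)) • (innerSL ℝ x)))
        + ((2 * psi1 N (‖x‖ ^ 2)) • (innerSL ℝ v : EuclideanSpace ℝ (Fin N) →L[ℝ] ℝ))) v
      = (2 * (inner ℝ v x : ℝ)) * ((2 * psi2 N (‖x‖ ^ 2)) * (inner ℝ x v : ℝ))
        + (2 * psi1 N (‖x‖ ^ 2)) * (inner ℝ v v : ℝ) := rfl
  rw [this, real_inner_self_eq_norm_sq, real_inner_comm x v]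
  ring

lemma lap_LamW (x : EuclideanSpace ℝ (Fin N)) :
    lap (LamW N) x = 4 * ‖x‖ ^ 2 * psi2 N (‖x‖ ^ 2) + 2 * N * psi1 N (‖x‖ ^ 2) := by
  unfold lap
  have h : ∀ i : Fin N,
      fderiv ℝ (fun y => fderiv ℝ (LamW N) y (EuclideanSpace.single i 1)) x
        (EuclideanSpace.single i 1)
      = 4 * psi2 N (‖x‖ ^ 2) * (x i) ^ 2 + 2 * psi1 N (‖x‖ ^ 2) := by
    intro i
    rw [second_deriv_LamW hN x (EuclideanSpace.single i 1)]
    rw [EuclideanSpace.inner_single_left]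
    simp [EuclideanSpace.norm_single]
  simp only [h]
  rw [Finset.sum_add_distrib]
  have hsum : ∑ i : Fin N, (x i) ^ 2 = ‖x‖ ^ 2 := by
    rw [EuclideanSpace.norm_eq]
    rw [Real.sq_sqrt (by positivity)]
    simp [sq_abs]
  rw [← Finset.mul_sum, Finset.sum_const]
  simp only [Finset.card_univ, Fintype.card_fin]
  rw [hsum, nsmul_eq_mul]
  push_cast
  ring

lemma lap_LamW_pde (x : EuclideanSpace ℝ (Fin N)) :
    lap (LamW N) x
      = -((((N:ℝ) + 2) / ((N:ℝ) - 2)) * (groundW N x) ^ ((4:ℝ) / ((N:ℝ) - 2))) * LamW N x := by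
  rw [lap_LamW hN x, LamW_eq hN x, groundW_eq x]
  have h := ode hN (show (0:ℝ) ≤ ‖x‖ ^ 2 by positivity)
  linarith [h]

lemma pow_mul_ph_le {k m : ℕ} (hmk : m ≤ k) {s : ℝ} (hs : 0 ≤ s) :
    s ^ m * ph N k s ≤ (cc N) ^ m := by
  have hcpos := hc hN
  have htpos := ht0 hN hs
  have hts : s ≤ cc N * tt N s := by
    unfold tt
    have : cc N * (1 + s / cc N) = cc N + s := by field_simp
    rw [this]; linarith
  have h1 : s ^ m ≤ (cc N * tt N s) ^ m := pow_le_pow_left₀ hs hts m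
  have h2 : s ^ m * ph N k s ≤ (cc N * tt N s) ^ m * ph N k s :=
    mul_le_mul_of_nonneg_right h1 (ph_pos hN hs).le
  refine h2.trans ?_
  rw [mul_pow, mul_assoc]
  have h3 : (tt N s) ^ m * ph N k s ≤ 1 := by
    unfold ph
    rw [← Real.rpow_natCast (tt N s) m, ← Real.rpow_add htpos]
    apply Real.rpow_le_one_of_one_le_of_nonpos (ht hN hs)
    have hpk : (m:ℝ) ≤ (k:ℝ) := by exact_mod_cast hmk
    have := hp hN
    linarith
  calc (cc N)^m * ((tt N s)^m * ph N k s) ≤ (cc N)^m * 1 :=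
        mul_le_mul_of_nonneg_left h3 (by positivity)
    _ = (cc N)^m := by ring
  
lemma abs_dd1_le {s : ℝ} (hs : 0 ≤ s) : |dd1 N s| ≤ pp N / cc N := by
  have h1 := ph_pos hN (k := 1) hs
  have h2 := ph_le_one hN (k := 1) hs
  have hp' := hp hN
  have hc' := hc hN
  unfold dd1
  rw [abs_mul, abs_of_pos h1]
  have : |(-(pp N) / cc N)| = pp N / cc N := by
    rw [abs_div, abs_neg, abs_of_pos hp', abs_of_pos hc']
  rw [this]
  calc pp N / cc N * ph N 1 s ≤ pp N / cc N * 1 :=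
        mul_le_mul_of_nonneg_left h2 (by positivity)
    _ = pp N / cc N := by ring

lemma abs_s_dd1_le {s : ℝ} (hs : 0 ≤ s) : |s * dd1 N s| ≤ pp N := by
  have hp' := hp hN
  have hc' := hc hN
  have h1 := ph_pos hN (k := 1) hs
  have key := pow_mul_ph_le hN (k := 1) (m := 1) le_rfl hs
  rw [pow_one, pow_one] at key
  unfold dd1
  rw [abs_mul, abs_mul, abs_of_nonneg hs, abs_of_pos h1]
  have : |(-(pp N) / cc N)| = pp N / cc N := by
    rw [abs_div, abs_neg, abs_of_pos hp', abs_of_pos hc']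
  rw [this]
  calc s * (pp N / cc N * ph N 1 s) = (pp N / cc N) * (s * ph N 1 s) := by ring
    _ ≤ (pp N / cc N) * cc N := mul_le_mul_of_nonneg_left key (by positivity)
    _ = pp N := by field_simp

lemma abs_dd2_le {s : ℝ} (hs : 0 ≤ s) : |dd2 N s| ≤ pp N * (pp N + 1) / (cc N)^2 := by
  have h1 := ph_pos hN (k := 2) hs
  have h2 := ph_le_one hN (k := 2) hs
  have hp' := hp hN
  have hc' := hc hN
  unfold dd2
  rw [abs_mul, abs_of_pos h1, abs_of_pos (by positivity : (0:ℝ) < pp N * (pp N + 1) / (cc N)^2)]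
  nlinarith [h1.le, h2, (by positivity : (0:ℝ) < pp N * (pp N + 1) / (cc N)^2)]

lemma abs_s_dd2_le {s : ℝ} (hs : 0 ≤ s) : |s * dd2 N s| ≤ pp N * (pp N + 1) / cc N := by
  have hp' := hp hN
  have hc' := hc hN
  have h1 := ph_pos hN (k := 2) hs
  have key := pow_mul_ph_le hN (k := 2) (m := 1) (by norm_num) hs
  simp only [pow_one] at key
  unfold dd2
  rw [abs_mul, abs_mul, abs_of_nonneg hs, abs_of_pos h1,
    abs_of_pos (by positivity : (0:ℝ) < pp N * (pp N + 1) / (cc N)^2)]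
  calc s * (pp N * (pp N + 1) / (cc N)^2 * ph N 2 s)
      = (pp N * (pp N + 1) / (cc N)^2) * (s * ph N 2 s) := by ring
    _ ≤ (pp N * (pp N + 1) / (cc N)^2) * cc N := mul_le_mul_of_nonneg_left key (by positivity)
    _ = pp N * (pp N + 1) / cc N := by field_simp

lemma abs_s_dd3_le {s : ℝ} (hs : 0 ≤ s) :
    |s * dd3 N s| ≤ pp N * (pp N + 1) * (pp N + 2) / (cc N)^2 := by
  have hp' := hp hN
  have hc' := hc hN
  have h1 := ph_pos hN (k := 3) hs
  have key := pow_mul_ph_le hN (k := 3) (m := 1) (by norm_num) hs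
  simp only [pow_one] at key
  unfold dd3
  rw [abs_mul, abs_mul, abs_of_nonneg hs, abs_of_pos h1]
  have : |(-(pp N) * (pp N + 1) * (pp N + 2) / (cc N)^3)|
      = pp N * (pp N + 1) * (pp N + 2) / (cc N)^3 := by
    rw [abs_div]
    rw [abs_of_pos (by positivity : (0:ℝ) < (cc N)^3)]
    congr 1
    rw [abs_mul, abs_mul, abs_neg, abs_of_pos hp', abs_of_pos (by linarith : (0:ℝ) < pp N + 1),
      abs_of_pos (by linarith : (0:ℝ) < pp N + 2)]
  rw [this]
  calc s * (pp N * (pp N + 1) * (pp N + 2) / (cc N)^3 * ph N 3 s)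
      = (pp N * (pp N + 1) * (pp N + 2) / (cc N)^3) * (s * ph N 3 s) := by ring
    _ ≤ (pp N * (pp N + 1) * (pp N + 2) / (cc N)^3) * cc N :=
        mul_le_mul_of_nonneg_left key (by positivity)
    _ = pp N * (pp N + 1) * (pp N + 2) / (cc N)^2 := by field_simp

lemma abs_psi0_le {s : ℝ} (hs : 0 ≤ s) : |psi0 N s| ≤ 3 * pp N := by
  have hp' := hp hN
  have h0pos := ph_pos hN (k := 0) hs
  have h0le := ph_le_one hN (k := 0) hs
  have h1 := abs_s_dd1_le hN hs
  unfold psi0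
  calc |pp N * ph N 0 s + 2 * s * dd1 N s| ≤ |pp N * ph N 0 s| + |2 * s * dd1 N s| := abs_add_le _ _
    _ = pp N * ph N 0 s + 2 * |s * dd1 N s| := by
        rw [abs_mul, abs_of_pos hp', abs_of_pos h0pos]
        rw [show (2:ℝ) * s * dd1 N s = 2 * (s * dd1 N s) by ring, abs_mul]
        norm_num
    _ ≤ pp N * 1 + 2 * pp N := by
        have := mul_le_mul_of_nonneg_left h0le hp'.le
        linarith
    _ = 3 * pp N := by ring

noncomputable def C1 (N : ℕ) : ℝ :=
  (pp N + 2) * (pp N / cc N) + 2 * (pp N * (pp N + 1) / cc N)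

lemma abs_psi1_le {s : ℝ} (hs : 0 ≤ s) : |psi1 N s| ≤ C1 N := by
  have hp' := hp hN
  have h1 := abs_dd1_le hN hs
  have h2 := abs_s_dd2_le hN hs
  unfold psi1 C1
  calc |(pp N + 2) * dd1 N s + 2 * s * dd2 N s|
      ≤ |(pp N + 2) * dd1 N s| + |2 * s * dd2 N s| := abs_add_le _ _
    _ = (pp N + 2) * |dd1 N s| + 2 * |s * dd2 N s| := by
        rw [abs_mul, abs_of_pos (by linarith : (0:ℝ) < pp N + 2)]
        rw [show (2:ℝ) * s * dd2 N s = 2 * (s * dd2 N s) by ring, abs_mul]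
        norm_num
    _ ≤ (pp N + 2) * (pp N / cc N) + 2 * (pp N * (pp N + 1) / cc N) := by
        have := mul_le_mul_of_nonneg_left h1 (by linarith : (0:ℝ) ≤ pp N + 2)
        linarith

noncomputable def C1' (N : ℕ) : ℝ := (pp N + 2) * pp N + 2 * (pp N * (pp N + 1))

lemma abs_s_psi1_le {s : ℝ} (hs : 0 ≤ s) : |s * psi1 N s| ≤ C1' N := by
  have hp' := hp hN
  have hc' := hc hN
  have h1 := abs_s_dd1_le hN hs
  have key2 := pow_mul_ph_le hN (k := 2) (m := 2) le_rfl hs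
  have h2pos := ph_pos hN (k := 2) hs
  have hs2 : |s^2 * dd2 N s| ≤ pp N * (pp N + 1) := by
    unfold dd2
    rw [abs_mul, abs_mul, abs_of_nonneg (by positivity : (0:ℝ) ≤ s^2), abs_of_pos h2pos,
      abs_of_pos (by positivity : (0:ℝ) < pp N * (pp N + 1) / (cc N)^2)]
    calc s^2 * (pp N * (pp N + 1) / (cc N)^2 * ph N 2 s)
        = (pp N * (pp N + 1) / (cc N)^2) * (s^2 * ph N 2 s) := by ring
      _ ≤ (pp N * (pp N + 1) / (cc N)^2) * (cc N)^2 :=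
          mul_le_mul_of_nonneg_left key2 (by positivity)
      _ = pp N * (pp N + 1) := by field_simp
  unfold psi1 C1'
  calc |s * ((pp N + 2) * dd1 N s + 2 * s * dd2 N s)|
      = |(pp N + 2) * (s * dd1 N s) + 2 * (s^2 * dd2 N s)| := by ring_nf
    _ ≤ |(pp N + 2) * (s * dd1 N s)| + |2 * (s^2 * dd2 N s)| := abs_add_le _ _
    _ = (pp N + 2) * |s * dd1 N s| + 2 * |s^2 * dd2 N s| := by
        rw [abs_mul (pp N + 2) (s * dd1 N s), abs_mul 2 (s^2 * dd2 N s),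
          abs_of_pos (by linarith : (0:ℝ) < pp N + 2)]
        norm_num
    _ ≤ (pp N + 2) * pp N + 2 * (pp N * (pp N + 1)) := by
        have := mul_le_mul_of_nonneg_left h1 (by linarith : (0:ℝ) ≤ pp N + 2)
        linarith

noncomputable def C2' (N : ℕ) : ℝ :=
  (pp N + 4) * (pp N * (pp N + 1) / cc N) + 2 * (pp N * (pp N + 1) * (pp N + 2) / cc N)

lemma abs_s_psi2_le {s : ℝ} (hs : 0 ≤ s) : |s * psi2 N s| ≤ C2' N := by
  have hp' := hp hN
  have hc' := hc hN
  have h1 := abs_s_dd2_le hN hs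
  have key2 := pow_mul_ph_le hN (k := 3) (m := 2) (by norm_num) hs
  have h3pos := ph_pos hN (k := 3) hs
  have hs2 : |s^2 * dd3 N s| ≤ pp N * (pp N + 1) * (pp N + 2) / cc N := by
    unfold dd3
    rw [abs_mul, abs_mul, abs_of_nonneg (by positivity : (0:ℝ) ≤ s^2), abs_of_pos h3pos]
    have habs : |(-(pp N) * (pp N + 1) * (pp N + 2) / (cc N)^3)|
        = pp N * (pp N + 1) * (pp N + 2) / (cc N)^3 := by
      rw [abs_div, abs_of_pos (by positivity : (0:ℝ) < (cc N)^3)]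
      congr 1
      rw [abs_mul, abs_mul, abs_neg, abs_of_pos hp', abs_of_pos (by linarith : (0:ℝ) < pp N + 1),
        abs_of_pos (by linarith : (0:ℝ) < pp N + 2)]
    rw [habs]
    calc s^2 * (pp N * (pp N + 1) * (pp N + 2) / (cc N)^3 * ph N 3 s)
        = (pp N * (pp N + 1) * (pp N + 2) / (cc N)^3) * (s^2 * ph N 3 s) := by ring
      _ ≤ (pp N * (pp N + 1) * (pp N + 2) / (cc N)^3) * (cc N)^2 :=
          mul_le_mul_of_nonneg_left key2 (by positivity)
      _ = pp N * (pp N + 1) * (pp N + 2) / cc N := by field_simp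
  unfold psi2 C2'
  calc |s * ((pp N + 4) * dd2 N s + 2 * s * dd3 N s)|
      = |(pp N + 4) * (s * dd2 N s) + 2 * (s^2 * dd3 N s)| := by ring_nf
    _ ≤ |(pp N + 4) * (s * dd2 N s)| + |2 * (s^2 * dd3 N s)| := abs_add_le _ _
    _ = (pp N + 4) * |s * dd2 N s| + 2 * |s^2 * dd3 N s| := by
        rw [abs_mul (pp N + 4) (s * dd2 N s), abs_mul 2 (s^2 * dd3 N s),
          abs_of_pos (by linarith : (0:ℝ) < pp N + 4)]
        norm_num
    _ ≤ (pp N + 4) * (pp N * (pp N + 1) / cc N) + 2 * (pp N * (pp N + 1) * (pp N + 2) / cc N) := by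
        have := mul_le_mul_of_nonneg_left h1 (by linarith : (0:ℝ) ≤ pp N + 4)
        linarith

-- spatial bounds
lemma bound_LamW (x : EuclideanSpace ℝ (Fin N)) : |LamW N x| ≤ 3 * pp N := by
  rw [LamW_eq hN x]
  exact abs_psi0_le hN (by positivity)

lemma bound_fderiv_LamW (x v : EuclideanSpace ℝ (Fin N)) (hv : ‖v‖ ≤ 1) :
    |fderiv ℝ (LamW N) x v| ≤ 2 * (C1 N + C1' N) := by
  rw [fderiv_LamW_apply hN x v]
  have hx1 : |(inner ℝ x v : ℝ)| ≤ ‖x‖ := by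
    calc |(inner ℝ x v : ℝ)| ≤ ‖x‖ * ‖v‖ := abs_real_inner_le_norm x v
      _ ≤ ‖x‖ * 1 := mul_le_mul_of_nonneg_left hv (norm_nonneg x)
      _ = ‖x‖ := by ring
  have hs : (0:ℝ) ≤ ‖x‖^2 := by positivity
  have h1 := abs_psi1_le hN hs
  have h2 := abs_s_psi1_le hN hs
  have hxx : ‖x‖ ≤ 1 + ‖x‖^2 := by nlinarith [norm_nonneg x]
  have habs1 : (0:ℝ) ≤ |psi1 N (‖x‖^2)| := abs_nonneg _
  calc |2 * psi1 N (‖x‖ ^ 2) * (inner ℝ x v : ℝ)|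
      = 2 * |psi1 N (‖x‖^2)| * |(inner ℝ x v : ℝ)| := by rw [abs_mul, abs_mul]; norm_num
    _ ≤ 2 * |psi1 N (‖x‖^2)| * ‖x‖ := by
        apply mul_le_mul_of_nonneg_left hx1; positivity
    _ ≤ 2 * |psi1 N (‖x‖^2)| * (1 + ‖x‖^2) := by
        apply mul_le_mul_of_nonneg_left hxx; positivity
    _ = 2 * (|psi1 N (‖x‖^2)| + |psi1 N (‖x‖^2)| * ‖x‖^2) := by ring
    _ ≤ 2 * (C1 N + C1' N) := by
        have h3 : |psi1 N (‖x‖^2)| * ‖x‖^2 ≤ C1' N := by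
          rw [abs_mul, abs_of_nonneg hs] at h2
          linarith
        linarith

lemma bound_second_LamW (x v : EuclideanSpace ℝ (Fin N)) (hv : ‖v‖ ≤ 1) :
    |fderiv ℝ (fun y => fderiv ℝ (LamW N) y v) x v| ≤ 4 * C2' N + 2 * C1 N := by
  rw [second_deriv_LamW hN x v]
  have hs : (0:ℝ) ≤ ‖x‖^2 := by positivity
  have h1 := abs_psi1_le hN hs
  have h2 := abs_s_psi2_le hN hs
  have hx1 : (inner ℝ v x : ℝ)^2 ≤ ‖x‖^2 := by
    have := abs_real_inner_le_norm v x
    have h' : |(inner ℝ v x : ℝ)| ≤ ‖x‖ := by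
      calc |(inner ℝ v x : ℝ)| ≤ ‖v‖ * ‖x‖ := this
        _ ≤ 1 * ‖x‖ := mul_le_mul_of_nonneg_right hv (norm_nonneg x)
        _ = ‖x‖ := by ring
    nlinarith [abs_nonneg (inner ℝ v x : ℝ), sq_abs (inner ℝ v x : ℝ)]
  have hv2 : ‖v‖^2 ≤ 1 := by nlinarith [norm_nonneg v]
  have hterm1 : |4 * psi2 N (‖x‖^2) * (inner ℝ v x : ℝ)^2| ≤ 4 * C2' N := by
    rw [abs_mul, abs_mul]
    have hps : |psi2 N (‖x‖^2)| * (inner ℝ v x : ℝ)^2 ≤ |psi2 N (‖x‖^2)| * ‖x‖^2 := by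
      apply mul_le_mul_of_nonneg_left hx1 (abs_nonneg _)
    have hps2 : |psi2 N (‖x‖^2)| * ‖x‖^2 ≤ C2' N := by
      rw [abs_mul, abs_of_nonneg hs] at h2
      linarith
    have : |(4:ℝ)| = 4 := by norm_num
    rw [this, abs_of_nonneg (by positivity : (0:ℝ) ≤ (inner ℝ v x : ℝ)^2)]
    nlinarith [abs_nonneg (psi2 N (‖x‖^2))]
  have hterm2 : |2 * psi1 N (‖x‖^2) * ‖v‖^2| ≤ 2 * C1 N := by
    rw [abs_mul, abs_mul]
    have : |(2:ℝ)| = 2 := by norm_num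
    rw [this, abs_of_nonneg (by positivity : (0:ℝ) ≤ ‖v‖^2)]
    nlinarith [abs_nonneg (psi1 N (‖x‖^2))]
  calc |4 * psi2 N (‖x‖ ^ 2) * (inner ℝ v x : ℝ) ^ 2 + 2 * psi1 N (‖x‖ ^ 2) * ‖v‖ ^ 2|
      ≤ |4 * psi2 N (‖x‖^2) * (inner ℝ v x : ℝ)^2| + |2 * psi1 N (‖x‖^2) * ‖v‖^2| := abs_add_le _ _
    _ ≤ 4 * C2' N + 2 * C1 N := by linarith

lemma groundW_pos (x : EuclideanSpace ℝ (Fin N)) : 0 < groundW N x := by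
  rw [groundW_eq x]; exact ph_pos hN (by positivity)

lemma groundW_le_one (x : EuclideanSpace ℝ (Fin N)) : groundW N x ≤ 1 := by
  rw [groundW_eq x]; exact ph_le_one hN (by positivity)

lemma bound_kappa (x : EuclideanSpace ℝ (Fin N)) :
    |(((N:ℝ) + 2) / ((N:ℝ) - 2)) * (groundW N x) ^ ((4:ℝ) / ((N:ℝ) - 2))|
      ≤ ((N:ℝ) + 2) / ((N:ℝ) - 2) := by
  have hNR' := hNR hN
  have h1 := groundW_pos hN x
  have h2 := groundW_le_one hN x
  have hN2 : (0:ℝ) < (N:ℝ) - 2 := by linarith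
  have hfrac : (0:ℝ) < ((N:ℝ) + 2) / ((N:ℝ) - 2) := div_pos (by linarith) hN2
  have hexp : (0:ℝ) ≤ 4 / ((N:ℝ) - 2) := (div_pos (by norm_num) hN2).le
  have h3 : (groundW N x) ^ ((4:ℝ) / ((N:ℝ) - 2)) ≤ 1 :=
    Real.rpow_le_one h1.le h2 hexp
  have h4 : (0:ℝ) < (groundW N x) ^ ((4:ℝ) / ((N:ℝ) - 2)) := Real.rpow_pos_of_pos h1 _
  rw [abs_mul, abs_of_pos hfrac, abs_of_pos h4]
  nlinarith

-- continuity
lemma continuous_ph_comp (k : ℕ) :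
    Continuous (fun x : EuclideanSpace ℝ (Fin N) => ph N k (‖x‖^2)) := by
  have hbase : Continuous (fun x : EuclideanSpace ℝ (Fin N) => tt N (‖x‖^2)) := by
    unfold tt
    exact continuous_const.add ((continuous_norm.pow 2).div_const _)
  rw [continuous_iff_continuousAt]
  intro x
  have h1 : ContinuousAt (fun u : ℝ => u ^ (-(pp N) - (k:ℝ))) (tt N (‖x‖^2)) :=
    Real.continuousAt_rpow_const _ _ (Or.inl (ht0 hN (by positivity : (0:ℝ) ≤ ‖x‖^2)).ne')
  exact ContinuousAt.comp (g := fun u : ℝ => u ^ (-(pp N) - (k:ℝ)))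
    (f := fun x : EuclideanSpace ℝ (Fin N) => tt N (‖x‖^2)) h1 hbase.continuousAt

lemma continuous_psi1_comp :
    Continuous (fun x : EuclideanSpace ℝ (Fin N) => psi1 N (‖x‖^2)) := by
  have c1 := continuous_ph_comp hN 1
  have c2 := continuous_ph_comp hN 2
  unfold psi1 dd1 dd2
  exact (continuous_const.mul (continuous_const.mul c1)).add
    ((continuous_const.mul (continuous_norm.pow 2)).mul (continuous_const.mul c2))

lemma continuous_psi2_comp :
    Continuous (fun x : EuclideanSpace ℝ (Fin N) => psi2 N (‖x‖^2)) := by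
  have c2 := continuous_ph_comp hN 2
  have c3 := continuous_ph_comp hN 3
  unfold psi2 dd2 dd3
  exact (continuous_const.mul (continuous_const.mul c2)).add
    ((continuous_const.mul (continuous_norm.pow 2)).mul (continuous_const.mul c3))

lemma continuous_second_LamW (v : EuclideanSpace ℝ (Fin N)) :
    Continuous (fun x => fderiv ℝ (fun y => fderiv ℝ (LamW N) y v) x v) := by
  have heq : (fun x => fderiv ℝ (fun y => fderiv ℝ (LamW N) y v) x v)
      = fun x : EuclideanSpace ℝ (Fin N) =>
        4 * psi2 N (‖x‖ ^ 2) * (inner ℝ v x : ℝ) ^ 2 + 2 * psi1 N (‖x‖ ^ 2) * ‖v‖ ^ 2 := by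
    funext x
    exact second_deriv_LamW hN x v
  rw [heq]
  have hinner : Continuous (fun x : EuclideanSpace ℝ (Fin N) => (inner ℝ v x : ℝ)) :=
    (innerSL ℝ v).continuous
  exact ((continuous_const.mul (continuous_psi2_comp hN)).mul (hinner.pow 2)).add
    ((continuous_const.mul (continuous_psi1_comp hN)).mul continuous_const)

lemma continuous_kappa :
    Continuous (fun x : EuclideanSpace ℝ (Fin N) =>
      (((N:ℝ) + 2) / ((N:ℝ) - 2)) * (groundW N x) ^ ((4:ℝ) / ((N:ℝ) - 2))) := by
  apply continuous_const.mul
  rw [continuous_iff_continuousAt]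
  intro x
  have h1 : ContinuousAt (fun u : ℝ => u ^ ((4:ℝ) / ((N:ℝ) - 2))) (groundW N x) :=
    Real.continuousAt_rpow_const _ _ (Or.inl (groundW_pos hN x).ne')
  have h2 : Continuous (groundW N) := by
    have := continuous_ph_comp hN (N := N) 0
    rw [show groundW N = fun y : EuclideanSpace ℝ (Fin N) => ph N 0 (‖y‖ ^ 2) from
      funext groundW_eq]
    exact this
  exact h1.comp h2.continuousAt

omit hN in
lemma schwartz_mul_integrable (g : SchwartzMap (EuclideanSpace ℝ (Fin N)) ℝ)
    {f : EuclideanSpace ℝ (Fin N) → ℝ} (hf : Continuous f) {C : ℝ}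
    (hC : ∀ x, |f x| ≤ C) : Integrable (fun x => g x * f x) volume := by
  have h := MeasureTheory.Integrable.bdd_mul (g.integrable (μ := volume)) hf.aestronglyMeasurable
    (Filter.Eventually.of_forall fun x => by simpa [Real.norm_eq_abs] using hC x)
  have heq : (fun x => g x * f x) = fun x => f x * g x := by funext x; ring
  rw [heq]
  exact h

end

theorem eigenfunction_orthogonal_to_LamW (N : ℕ) (hN : 3 ≤ N) (nu : ℝ) (hnu : nu ≠ 0)
    (Y : SchwartzMap (EuclideanSpace ℝ (Fin N)) ℝ)
    (hYeigen : ∀ x, -lap (⇑Y) x -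
      (((N : ℝ) + 2) / ((N : ℝ) - 2)) * (groundW N x) ^ ((4 : ℝ) / ((N : ℝ) - 2)) * Y x =
        -nu ^ 2 * Y x) :
    ∫ x, Y x * LamW N x = 0 := by
  classical
  set kap : EuclideanSpace ℝ (Fin N) → ℝ :=
    fun x => (((N : ℝ) + 2) / ((N : ℝ) - 2)) * (groundW N x) ^ ((4 : ℝ) / ((N : ℝ) - 2))
    with hkap
  have hkapCont : Continuous kap := continuous_kappa hN
  have hkapBdd : ∀ x, |kap x| ≤ ((N:ℝ) + 2) / ((N:ℝ) - 2) := fun x => bound_kappa hN x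
  have hZcont : Continuous (LamW N) := (differentiable_LamW hN).continuous
  have hZbdd : ∀ x, |LamW N x| ≤ 3 * pp N := fun x => bound_LamW hN x
  have hvnorm : ∀ i : Fin N, ‖(EuclideanSpace.single i (1:ℝ))‖ ≤ 1 := by
    intro i
    rw [EuclideanSpace.norm_single]
    norm_num
  -- per-direction identity
  have key : ∀ i : Fin N,
      (∫ x, Y x * fderiv ℝ (fun y => fderiv ℝ (LamW N) y (EuclideanSpace.single i 1)) x
          (EuclideanSpace.single i 1))
        = ∫ x, fderiv ℝ (fun y => fderiv ℝ (⇑Y) y (EuclideanSpace.single i 1)) x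
            (EuclideanSpace.single i 1) * LamW N x := by
    intro i
    set v : EuclideanSpace ℝ (Fin N) := EuclideanSpace.single i 1 with hv
    set Yi : SchwartzMap (EuclideanSpace ℝ (Fin N)) ℝ := LineDeriv.lineDerivOp v Y with hYidef
    set Yii : SchwartzMap (EuclideanSpace ℝ (Fin N)) ℝ := LineDeriv.lineDerivOp v Yi
      with hYiidef
    have hYi : ⇑Yi = fun x => fderiv ℝ (⇑Y) x v := by
      funext x; exact SchwartzMap.lineDerivOp_apply_eq_fderiv v Y x
    have hYii : ⇑Yii = fun x => fderiv ℝ (fun y => fderiv ℝ (⇑Y) y v) x v := by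
      funext x
      have h1 : Yii x = fderiv ℝ (⇑Yi) x v := SchwartzMap.lineDerivOp_apply_eq_fderiv v Yi x
      rw [h1, hYi]
    have hZv_diff : Differentiable ℝ (fun y => fderiv ℝ (LamW N) y v) :=
      fun x => (hasFDerivAt_fderiv_LamW hN x v).differentiableAt
    have hZv_cont : Continuous (fun y => fderiv ℝ (LamW N) y v) := hZv_diff.continuous
    have hZv_bdd : ∀ x, |fderiv ℝ (LamW N) x v| ≤ 2 * (C1 N + C1' N) :=
      fun x => bound_fderiv_LamW hN x v (hvnorm i)
    have hZvv_cont : Continuous (fun x => fderiv ℝ (fun y => fderiv ℝ (LamW N) y v) x v) :=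
      continuous_second_LamW hN v
    have hZvv_bdd : ∀ x, |fderiv ℝ (fun y => fderiv ℝ (LamW N) y v) x v|
        ≤ 4 * C2' N + 2 * C1 N := fun x => bound_second_LamW hN x v (hvnorm i)
    have intYiZ : Integrable (fun x => Yi x * LamW N x) volume :=
      schwartz_mul_integrable Yi hZcont hZbdd
    have intYiiZ : Integrable (fun x => Yii x * LamW N x) volume :=
      schwartz_mul_integrable Yii hZcont hZbdd
    have intYiZv : Integrable (fun x => Yi x * fderiv ℝ (LamW N) x v) volume :=
      schwartz_mul_integrable Yi hZv_cont hZv_bdd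
    have intYZv : Integrable (fun x => Y x * fderiv ℝ (LamW N) x v) volume :=
      schwartz_mul_integrable Y hZv_cont hZv_bdd
    have intYZvv : Integrable
        (fun x => Y x * fderiv ℝ (fun y => fderiv ℝ (LamW N) y v) x v) volume :=
      schwartz_mul_integrable Y hZvv_cont hZvv_bdd
    have step2 : (∫ x, Y x * fderiv ℝ (fun y => fderiv ℝ (LamW N) y v) x v)
        = - ∫ x, fderiv ℝ (⇑Y) x v * fderiv ℝ (LamW N) x v := by
      apply integral_mul_fderiv_eq_neg_fderiv_mul_of_integrable
      · have heq : (fun x => fderiv ℝ (⇑Y) x v * fderiv ℝ (LamW N) x v)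
            = fun x => Yi x * fderiv ℝ (LamW N) x v := by
          funext x; rw [hYi]
        rw [heq]; exact intYiZv
      · exact intYZvv
      · exact intYZv
      · exact fun x _ => Y.differentiable x
      · exact fun x _ => hZv_diff x
    have step1 : (∫ x, Yi x * fderiv ℝ (LamW N) x v)
        = - ∫ x, fderiv ℝ (⇑Yi) x v * LamW N x := by
      apply integral_mul_fderiv_eq_neg_fderiv_mul_of_integrable
      · have heq : (fun x => fderiv ℝ (⇑Yi) x v * LamW N x)
            = fun x => Yii x * LamW N x := by
          funext x
          rw [show fderiv ℝ (⇑Yi) x v = Yii x from (SchwartzMap.lineDerivOp_apply_eq_fderiv v Yi x).symm]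
        rw [heq]; exact intYiiZ
      · exact intYiZv
      · exact intYiZ
      · exact fun x _ => Yi.differentiable x
      · exact fun x _ => differentiable_LamW hN x
    calc (∫ x, Y x * fderiv ℝ (fun y => fderiv ℝ (LamW N) y v) x v)
        = - ∫ x, fderiv ℝ (⇑Y) x v * fderiv ℝ (LamW N) x v := step2
      _ = - ∫ x, Yi x * fderiv ℝ (LamW N) x v := by
          have heq2 : (fun x => fderiv ℝ (⇑Y) x v * fderiv ℝ (LamW N) x v)
              = fun x => Yi x * fderiv ℝ (LamW N) x v := by
            funext x; rw [hYi]
          rw [heq2]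
      _ = ∫ x, fderiv ℝ (⇑Yi) x v * LamW N x := by rw [step1]; ring
      _ = ∫ x, fderiv ℝ (fun y => fderiv ℝ (⇑Y) y v) x v * LamW N x := by
          rw [show (⇑Yi) = fun y => fderiv ℝ (⇑Y) y v from hYi]
  -- global integrabilities
  have intYZ : Integrable (fun x => Y x * LamW N x) volume :=
    schwartz_mul_integrable Y hZcont hZbdd
  have hkapZ_cont : Continuous (fun x => kap x * LamW N x) := hkapCont.mul hZcont
  have hkapZ_bdd : ∀ x, |kap x * LamW N x| ≤ (((N:ℝ) + 2) / ((N:ℝ) - 2)) * (3 * pp N) := by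
    intro x
    rw [abs_mul]
    apply mul_le_mul (hkapBdd x) (hZbdd x) (abs_nonneg _)
      (le_trans (abs_nonneg _) (hkapBdd x))
  have intYkapZ : Integrable (fun x => Y x * (kap x * LamW N x)) volume :=
    schwartz_mul_integrable Y hkapZ_cont hkapZ_bdd
  have intA : ∀ i ∈ (Finset.univ : Finset (Fin N)), Integrable
      (fun x => Y x * fderiv ℝ (fun y => fderiv ℝ (LamW N) y (EuclideanSpace.single i 1)) x
        (EuclideanSpace.single i 1)) volume := by
    intro i _
    exact schwartz_mul_integrable Y (continuous_second_LamW hN _)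
      (fun x => bound_second_LamW hN x _ (hvnorm i))
  have intB : ∀ i ∈ (Finset.univ : Finset (Fin N)), Integrable
      (fun x => fderiv ℝ (fun y => fderiv ℝ (⇑Y) y (EuclideanSpace.single i 1)) x
        (EuclideanSpace.single i 1) * LamW N x) volume := by
    intro i _
    set v : EuclideanSpace ℝ (Fin N) := EuclideanSpace.single i 1 with hv
    set Yii : SchwartzMap (EuclideanSpace ℝ (Fin N)) ℝ :=
      LineDeriv.lineDerivOp v (LineDeriv.lineDerivOp v Y) with hYiidef
    have hYii : (fun x => fderiv ℝ (fun y => fderiv ℝ (⇑Y) y v) x v) = ⇑Yii := by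
      funext x
      have h1 : ⇑(LineDeriv.lineDerivOp v Y) = fun y => fderiv ℝ (⇑Y) y v :=
        funext fun y => SchwartzMap.lineDerivOp_apply_eq_fderiv v Y y
      calc fderiv ℝ (fun y => fderiv ℝ (⇑Y) y v) x v
          = fderiv ℝ (⇑(LineDeriv.lineDerivOp v Y)) x v := by rw [h1]
        _ = Yii x := (SchwartzMap.lineDerivOp_apply_eq_fderiv v (LineDeriv.lineDerivOp v Y) x).symm
    rw [show (fun x => fderiv ℝ (fun y => fderiv ℝ (⇑Y) y v) x v * LamW N x)
      = fun x => Yii x * LamW N x by rw [← hYii]]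
    exact schwartz_mul_integrable Yii hZcont hZbdd
  -- swap Laplacian
  have swap : ∫ x, Y x * lap (LamW N) x = ∫ x, lap (⇑Y) x * LamW N x := by
    unfold lap
    simp only [Finset.mul_sum, Finset.sum_mul]
    rw [integral_finset_sum _ intA, integral_finset_sum _ intB]
    exact Finset.sum_congr rfl (fun i _ => key i)
  -- use the PDEs
  have hpde : ∀ x, Y x * lap (LamW N) x = -(Y x * (kap x * LamW N x)) := by
    intro x
    rw [lap_LamW_pde hN x]
    simp only [hkap]
    ring
  have hlapY : ∀ x, lap (⇑Y) x = nu ^ 2 * Y x - kap x * Y x := by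
    intro x
    have h := hYeigen x
    simp only [hkap]
    nlinarith [h]
  have lhs : ∫ x, Y x * lap (LamW N) x = - ∫ x, Y x * (kap x * LamW N x) := by
    rw [← integral_neg]
    apply integral_congr_ae
    filter_upwards with x
    exact hpde x
  have rhs : ∫ x, lap (⇑Y) x * LamW N x
      = nu ^ 2 * (∫ x, Y x * LamW N x) - ∫ x, Y x * (kap x * LamW N x) := by
    have e1 : ∫ x, lap (⇑Y) x * LamW N x
        = ∫ x, (nu ^ 2 * (Y x * LamW N x) - Y x * (kap x * LamW N x)) := by
      apply integral_congr_ae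
      filter_upwards with x
      rw [hlapY x]
      ring
    rw [e1, integral_sub (intYZ.const_mul _) intYkapZ, integral_const_mul]
  have hfin : nu ^ 2 * (∫ x, Y x * LamW N x) = 0 := by
    have h := swap
    rw [lhs, rhs] at h
    linarith
  have hnu2 : nu ^ 2 ≠ 0 := pow_ne_zero 2 hnu
  exact (mul_eq_zero.mp hfin).resolve_left hnu2
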